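/- Let 𝒜 be an s*-algebra with positive central control C, and define r ∈ A_b by π_b(r) = (1 + π(C))⁻¹ for each irreducible admissible π (where π(C) = c_π·1 is a nonnegative scalar). For f_M ∈ C_c((0,1]) with f_M(x) = 1 for x ≥ (1+M)⁻¹, the element e_M = f_M(r) lies in A_c and satisfies θ_M(e_M) = 1 in A_{≤M}. Consequently every s*-algebra has the Tietze extension property: the projection A_c → A_{≤M} is surjective for every M > 0. -/
import Mathlib

/-- Tietze extension property for s*-algebras.  Let `𝒜` be a unital *-algebra
over `ℂ` with a positive central control `C`: for each irreducible admissible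
representation `p` (with image in the C*-algebra `B p = B(H_p)`, via the unital
*-homomorphism `π p`), `C` acts as the nonnegative scalar `c p`.  Then for every
`M > 0` there is an element `e = e_M` of `A_c` (given by `e p = f_M((1+c p)⁻¹)`
for suitable `f_M ∈ C_c((0,1])`): a uniformly bounded family `(e p)_p`,
approximable by elements of `𝒜` uniformly on every `P_{≤M''}` (so `e ∈ A_b`),
vanishing on `P_{≥M'}` for some `M'` (so `e ∈ A_c`), and with `e p = 1` for all
`p ∈ P_{≤M}` (so `θ_M(e) = 1` in `A_{≤M}`).  Consequently every s*-algebra has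
the Tietze extension property: `A_c → A_{≤M}` is surjective for every `M`. -/
theorem s_star_algebra_tietze_extension
    {𝒜 : Type*} [Ring 𝒜] [Algebra ℂ 𝒜] [StarRing 𝒜]
    {P : Type*} (B : P → Type*) [∀ p, NormedRing (B p)] [∀ p, StarRing (B p)]
    [∀ p, CStarRing (B p)] [∀ p, NormedAlgebra ℂ (B p)] [∀ p, CompleteSpace (B p)]
    (π : ∀ p, 𝒜 →⋆ₐ[ℂ] B p) (C : 𝒜) (c : P → ℝ) (hc : ∀ p, 0 ≤ c p)
    (hC : ∀ p, π p C = algebraMap ℂ (B p) (c p)) :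
    ∀ M : ℝ, 0 < M → ∃ (e : ∀ p, B p) (M' : ℝ), M < M' ∧
      (∀ p, c p ≤ M → e p = 1) ∧
      (∀ p, M' < c p → e p = 0) ∧
      (∃ K : ℝ, ∀ p, ‖e p‖ ≤ K) ∧
      (∀ M'' ε : ℝ, 0 < ε → ∃ a : 𝒜, ∀ p, c p ≤ M'' → ‖e p - π p a‖ ≤ ε) := by
  intro M hM
  -- cutoff function
  set g : ℝ → ℝ := fun x => min 1 (max 0 (M + 1 - x)) with hg
  have hg_cont : Continuous g := by
    apply Continuous.min continuous_const
    exact Continuous.max continuous_const (by continuity)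
  have hg_nonneg : ∀ x, 0 ≤ g x := fun x =>
    le_min zero_le_one (le_max_left _ _)
  have hg_le_one : ∀ x, g x ≤ 1 := fun x => min_le_left _ _
  have hnorm_one : ∀ p, ‖(1 : B p)‖ ≤ 1 := by
    intro p
    have h := CStarRing.norm_star_mul_self (x := (1 : B p))
    simp only [star_one, one_mul] at h
    nlinarith [norm_nonneg (1 : B p)]
  have hnorm_map : ∀ p (z : ℝ), ‖algebraMap ℂ (B p) (z : ℂ)‖ ≤ |z| := by
    intro p z
    rw [norm_algebraMap]
    calc ‖(z : ℂ)‖ * ‖(1 : B p)‖ ≤ ‖(z : ℂ)‖ * 1 :=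
          mul_le_mul_of_nonneg_left (hnorm_one p) (norm_nonneg _)
      _ = |z| := by simp [Complex.norm_real]
  refine ⟨fun p => algebraMap ℂ (B p) ((g (c p) : ℝ) : ℂ), M + 1, by linarith, ?_, ?_, ⟨1, ?_⟩, ?_⟩
  · intro p hp
    have : g (c p) = 1 := by
      have h1 : (1 : ℝ) ≤ M + 1 - c p := by linarith
      simp [hg, max_eq_right (le_trans zero_le_one h1), min_eq_left h1]
    simp only [this, Complex.ofReal_one, map_one]
  · intro p hp
    have : g (c p) = 0 := by
      have h1 : M + 1 - c p ≤ 0 := by linarith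
      simp [hg, max_eq_left h1]
    simp only [this, Complex.ofReal_zero, map_zero]
  · intro p
    exact le_trans (hnorm_map p _) (by rw [abs_of_nonneg (hg_nonneg _)]; exact hg_le_one _)
  · intro M'' ε hε
    obtain ⟨q, hq⟩ := exists_polynomial_near_of_continuousOn 0 (max 0 M'') g
      (hg_cont.continuousOn) ε hε
    refine ⟨Polynomial.aeval C (q.map (algebraMap ℝ ℂ)), ?_⟩
    intro p hp
    have hmem : c p ∈ Set.Icc 0 (max 0 M'') := ⟨hc p, le_max_of_le_right hp⟩
    have hπ : π p (Polynomial.aeval C (q.map (algebraMap ℝ ℂ)))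
        = algebraMap ℂ (B p) ((q.eval (c p) : ℝ) : ℂ) := by
      have h1 := Polynomial.aeval_algHom_apply (π p).toAlgHom C (q.map (algebraMap ℝ ℂ))
      simp only [StarAlgHom.coe_toAlgHom] at h1
      rw [← h1, hC p, Polynomial.aeval_algebraMap_apply]
      congr 1
      rw [Polynomial.aeval_map_algebraMap]
      rw [show ((c p : ℝ) : ℂ) = algebraMap ℝ ℂ (c p) from rfl,
        Polynomial.aeval_algebraMap_apply]
      simp [Polynomial.coe_aeval_eq_eval]
    rw [hπ]
    have heq : algebraMap ℂ (B p) ((g (c p) : ℝ) : ℂ) - algebraMap ℂ (B p) ((q.eval (c p) : ℝ) : ℂ)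
        = algebraMap ℂ (B p) (((g (c p) - q.eval (c p) : ℝ) : ℂ)) := by
      rw [← map_sub]; norm_cast
    rw [heq]
    refine le_trans (hnorm_map p _) ?_
    rw [abs_sub_comm]
    exact le_of_lt (hq (c p) hmem)
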